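/- Let γ > 0 and τ ∈ ℝ^{d×d}_s. Define p := τ − max{0, 1 − γ/|τ^D|}·τ^D when τ^D ≠ 0, and p := τ when τ^D = 0. Then p ∈ K, and |τ − p| ≤ |τ − σ| for every σ ∈ K, with equality only if σ = p; in other words, p is the unique nearest point of K to τ in the Frobenius norm. -/

import Mathlib

open scoped Classical

/-- The Frobenius inner product `σ : τ = trace (σ τ)` on (symmetric) matrices. -/
noncomputable def frob {d : ℕ} (A B : Matrix (Fin d) (Fin d) ℝ) : ℝ :=
  Matrix.trace (A * B)

/-- The norm induced by the Frobenius inner product (on symmetric matrices). -/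
noncomputable def fnorm {d : ℕ} (A : Matrix (Fin d) (Fin d) ℝ) : ℝ :=
  Real.sqrt (frob A A)

/-- The deviator `τ^D = τ - (trace τ / d) • I`. -/
noncomputable def dev {d : ℕ} (A : Matrix (Fin d) (Fin d) ℝ) : Matrix (Fin d) (Fin d) ℝ :=
  A - (Matrix.trace A / (d : ℝ)) • (1 : Matrix (Fin d) (Fin d) ℝ)

/-- The smoothed max function `max_s`. -/
noncomputable def maxs (s r : ℝ) : ℝ :=
  if s ≤ |r| then max 0 r else (r + s) ^ 2 / (4 * s)

/-- The smoothed von Mises resolvent `R_s`. -/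
noncomputable def Rs {d : ℕ} (s γ : ℝ) (τ : Matrix (Fin d) (Fin d) ℝ) :
    Matrix (Fin d) (Fin d) ℝ :=
  if dev τ = 0 then τ else τ - maxs s (1 - γ / fnorm (dev τ)) • dev τ

/-- The projection `π_K` onto the von Mises admissible set
`K = {σ symmetric : |σ^D| ≤ γ}`. -/
noncomputable def projK {d : ℕ} (γ : ℝ) (τ : Matrix (Fin d) (Fin d) ℝ) :
    Matrix (Fin d) (Fin d) ℝ :=
  if dev τ = 0 then τ else τ - max 0 (1 - γ / fnorm (dev τ)) • dev τ

namespace VMaux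

variable {d : ℕ}

lemma frob_comm (A B : Matrix (Fin d) (Fin d) ℝ) : frob A B = frob B A :=
  Matrix.trace_mul_comm A B

lemma frob_add_left (A B C : Matrix (Fin d) (Fin d) ℝ) :
    frob (A + B) C = frob A C + frob B C := by
  simp [frob, add_mul]

lemma frob_sub_left (A B C : Matrix (Fin d) (Fin d) ℝ) :
    frob (A - B) C = frob A C - frob B C := by
  simp [frob, sub_mul]

lemma frob_smul_left (c : ℝ) (A B : Matrix (Fin d) (Fin d) ℝ) :
    frob (c • A) B = c * frob A B := by
  simp [frob, Matrix.smul_mul]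

lemma frob_add_right (A B C : Matrix (Fin d) (Fin d) ℝ) :
    frob A (B + C) = frob A B + frob A C := by
  simp [frob, mul_add]

lemma frob_sub_right (A B C : Matrix (Fin d) (Fin d) ℝ) :
    frob A (B - C) = frob A B - frob A C := by
  simp [frob, mul_sub]

lemma frob_smul_right (c : ℝ) (A B : Matrix (Fin d) (Fin d) ℝ) :
    frob A (c • B) = c * frob A B := by
  simp [frob, Matrix.mul_smul]

lemma frob_eq_sum {A B : Matrix (Fin d) (Fin d) ℝ} (hB : B.IsSymm) :
    frob A B = ∑ i, ∑ j, A i j * B i j := by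
  unfold frob Matrix.trace
  simp only [Matrix.diag, Matrix.mul_apply]
  refine Finset.sum_congr rfl fun i _ => Finset.sum_congr rfl fun j _ => ?_
  rw [hB.apply i j]

lemma frob_self_eq {A : Matrix (Fin d) (Fin d) ℝ} (hA : A.IsSymm) :
    frob A A = ∑ i, ∑ j, (A i j) ^ 2 := by
  rw [frob_eq_sum hA]
  refine Finset.sum_congr rfl fun i _ => Finset.sum_congr rfl fun j _ => (sq _).symm

lemma frob_self_nonneg {A : Matrix (Fin d) (Fin d) ℝ} (hA : A.IsSymm) :
    0 ≤ frob A A := by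
  rw [frob_self_eq hA]; positivity

lemma eq_zero_of_frob_self {A : Matrix (Fin d) (Fin d) ℝ} (hA : A.IsSymm)
    (h : frob A A = 0) : A = 0 := by
  rw [frob_self_eq hA] at h
  ext i j
  have h1 : ∀ i ∈ (Finset.univ : Finset (Fin d)), (0:ℝ) ≤ ∑ j, (A i j) ^ 2 := by
    intro i _; positivity
  have h2 := (Finset.sum_eq_zero_iff_of_nonneg h1).mp h i (Finset.mem_univ i)
  have h3 : ∀ j ∈ (Finset.univ : Finset (Fin d)), (0:ℝ) ≤ (A i j) ^ 2 := by
    intro j _; positivity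
  have h4 := (Finset.sum_eq_zero_iff_of_nonneg h3).mp h2 j (Finset.mem_univ j)
  have := sq_eq_zero_iff.mp h4
  simpa using this

lemma fnorm_nonneg (A : Matrix (Fin d) (Fin d) ℝ) : 0 ≤ fnorm A :=
  Real.sqrt_nonneg _

lemma fnorm_sq {A : Matrix (Fin d) (Fin d) ℝ} (hA : A.IsSymm) :
    fnorm A ^ 2 = frob A A :=
  Real.sq_sqrt (frob_self_nonneg hA)

lemma fnorm_zero : fnorm (0 : Matrix (Fin d) (Fin d) ℝ) = 0 := by
  simp [fnorm, frob]

lemma fnorm_eq_zero {A : Matrix (Fin d) (Fin d) ℝ} (hA : A.IsSymm)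
    (h : fnorm A = 0) : A = 0 := by
  apply eq_zero_of_frob_self hA
  have := (Real.sqrt_eq_zero (frob_self_nonneg hA)).mp h
  exact this

lemma fnorm_smul (c : ℝ) (A : Matrix (Fin d) (Fin d) ℝ) :
    fnorm (c • A) = |c| * fnorm A := by
  unfold fnorm
  rw [frob_smul_left, frob_smul_right, ← mul_assoc, ← sq,
    Real.sqrt_mul (sq_nonneg c), Real.sqrt_sq_eq_abs]

lemma cauchy_schwarz {A B : Matrix (Fin d) (Fin d) ℝ} (hA : A.IsSymm) (hB : B.IsSymm) :
    frob A B ≤ fnorm A * fnorm B := by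
  have h1 : (frob A B) ^ 2 ≤ frob A A * frob B B := by
    rw [frob_eq_sum hB, frob_self_eq hA, frob_self_eq hB]
    rw [← Finset.sum_product', ← Finset.sum_product', ← Finset.sum_product']
    exact Finset.sum_mul_sq_le_sq_mul_sq (Finset.univ ×ˢ Finset.univ)
      (fun p : Fin d × Fin d => A p.1 p.2) (fun p : Fin d × Fin d => B p.1 p.2)
  have h2 : (fnorm A * fnorm B) ^ 2 = frob A A * frob B B := by
    rw [mul_pow, fnorm_sq hA, fnorm_sq hB]
  have h3 : 0 ≤ fnorm A * fnorm B := mul_nonneg (fnorm_nonneg A) (fnorm_nonneg B)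
  nlinarith [h1, h2, h3]

lemma dev_isSymm {A : Matrix (Fin d) (Fin d) ℝ} (hA : A.IsSymm) : (dev A).IsSymm := by
  unfold Matrix.IsSymm dev at *
  rw [Matrix.transpose_sub, Matrix.transpose_smul, Matrix.transpose_one, hA]

lemma trace_dev (hd : 0 < d) (A : Matrix (Fin d) (Fin d) ℝ) :
    Matrix.trace (dev A) = 0 := by
  have hd' : (d : ℝ) ≠ 0 := Nat.cast_ne_zero.mpr hd.ne'
  simp [dev, Matrix.trace_sub, Matrix.trace_smul, Matrix.trace_one]
  field_simp
  ring

lemma dev_sub (A B : Matrix (Fin d) (Fin d) ℝ) : dev (A - B) = dev A - dev B := by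
  unfold dev
  rw [Matrix.trace_sub, sub_div, sub_smul]
  abel

lemma dev_smul (c : ℝ) (A : Matrix (Fin d) (Fin d) ℝ) : dev (c • A) = c • dev A := by
  unfold dev
  rw [Matrix.trace_smul, smul_eq_mul, mul_div_assoc, smul_sub, smul_smul]

lemma dev_of_trace_zero {A : Matrix (Fin d) (Fin d) ℝ} (h : Matrix.trace A = 0) :
    dev A = A := by
  simp [dev, h]

lemma dev_dev (hd : 0 < d) (A : Matrix (Fin d) (Fin d) ℝ) : dev (dev A) = dev A :=
  dev_of_trace_zero (trace_dev hd A)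

lemma dev_add_smul_one (A : Matrix (Fin d) (Fin d) ℝ) :
    A = dev A + (Matrix.trace A / (d : ℝ)) • (1 : Matrix (Fin d) (Fin d) ℝ) := by
  unfold dev; abel

lemma frob_smul_one (c : ℝ) (A : Matrix (Fin d) (Fin d) ℝ) :
    frob A (c • (1 : Matrix (Fin d) (Fin d) ℝ)) = c * Matrix.trace A := by
  simp [frob, Matrix.mul_smul]

lemma frob_self_decomp (hd : 0 < d) (A : Matrix (Fin d) (Fin d) ℝ) :
    frob A A = frob (dev A) (dev A) + (Matrix.trace A / (d : ℝ)) ^ 2 * d := by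
  set c := Matrix.trace A / (d : ℝ) with hc
  have htr : Matrix.trace (dev A) = 0 := trace_dev hd A
  calc frob A A = frob (dev A + c • 1) (dev A + c • 1) := by rw [← dev_add_smul_one]
    _ = frob (dev A) (dev A) + frob (dev A) (c • 1) + (frob (c • 1) (dev A)
          + frob (c • 1) (c • 1)) := by
        rw [frob_add_left, frob_add_right, frob_add_right]
    _ = frob (dev A) (dev A) + c ^ 2 * d := by
        have h1 : frob (dev A) (c • (1 : Matrix (Fin d) (Fin d) ℝ)) = 0 := by
          rw [frob_smul_one, htr, mul_zero]
        have h2 : frob (c • (1 : Matrix (Fin d) (Fin d) ℝ)) (dev A) = 0 := by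
          rw [frob_comm]; exact h1
        have h3 : frob (c • (1 : Matrix (Fin d) (Fin d) ℝ))
            (c • (1 : Matrix (Fin d) (Fin d) ℝ)) = c ^ 2 * d := by
          rw [frob_smul_one, Matrix.trace_smul, Matrix.trace_one]
          simp [smul_eq_mul]
          ring
        rw [h1, h2, h3]
        ring

end VMaux

set_option maxHeartbeats 1000000 in
open VMaux in
/-- Let `γ > 0` and `τ ∈ ℝ^{d×d}_s`.  The point
`p := τ - max{0, 1 - γ/|τ^D|} • τ^D` (with `p := τ` if `τ^D = 0`) belongs to the
von Mises admissible set `K = {σ ∈ ℝ^{d×d}_s : |σ^D| ≤ γ}`, and it is the unique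
nearest point of `K` to `τ` in the Frobenius norm: `|τ - p| ≤ |τ - σ|` for all
`σ ∈ K`, with equality only if `σ = p`. -/
theorem projection_onto_vonMises_set
    (d : ℕ) (hd : 0 < d) (γ : ℝ) (hγ : 0 < γ)
    (τ : Matrix (Fin d) (Fin d) ℝ) (hτ : τ.IsSymm) :
    ((projK γ τ).IsSymm ∧ fnorm (dev (projK γ τ)) ≤ γ) ∧
    ∀ σ : Matrix (Fin d) (Fin d) ℝ, σ.IsSymm → fnorm (dev σ) ≤ γ →
      fnorm (τ - projK γ τ) ≤ fnorm (τ - σ) ∧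
      (fnorm (τ - projK γ τ) = fnorm (τ - σ) → σ = projK γ τ) := by
  have hdτs : (dev τ).IsSymm := dev_isSymm hτ
  set N := fnorm (dev τ) with hNdef
  by_cases hle : N ≤ γ
  · -- projection is τ itself
    have hp : projK γ τ = τ := by
      unfold projK
      split_ifs with h
      · rfl
      · have hN0 : 0 < N := by
          rcases lt_or_eq_of_le (fnorm_nonneg (dev τ)) with h' | h'
          · exact h'
          · exact absurd (fnorm_eq_zero hdτs h'.symm) h
        have : 1 - γ / N ≤ 0 := by
          have : (1:ℝ) ≤ γ / N := (le_div_iff₀ hN0).mpr (by linarith)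
          linarith
        rw [max_eq_left this]
        simp
    rw [hp]
    refine ⟨⟨hτ, hle⟩, ?_⟩
    intro σ hσ hσγ
    have h0 : τ - τ = (0 : Matrix (Fin d) (Fin d) ℝ) := sub_self τ
    rw [h0, fnorm_zero]
    refine ⟨fnorm_nonneg _, fun he => ?_⟩
    have hsym : (τ - σ).IsSymm := by
      unfold Matrix.IsSymm at *
      rw [Matrix.transpose_sub, hτ, hσ]
    have := fnorm_eq_zero hsym he.symm
    have : σ = τ := by
      have := sub_eq_zero.mp this
      exact this.symm
    rw [this]
  · push_neg at hle
    have hN0 : 0 < N := lt_trans hγ hle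
    have hdevne : dev τ ≠ 0 := by
      intro h
      rw [hNdef, h, fnorm_zero] at hN0
      exact lt_irrefl 0 hN0
    have h01 : 0 ≤ 1 - γ / N := by
      have : γ / N < 1 := (div_lt_one hN0).mpr hle
      linarith
    have hp : projK γ τ = τ - (1 - γ / N) • dev τ := by
      unfold projK
      rw [if_neg hdevne, max_eq_right h01]
    have hps : (projK γ τ).IsSymm := by
      rw [hp]
      unfold Matrix.IsSymm at *
      rw [Matrix.transpose_sub, Matrix.transpose_smul, hτ, hdτs]
    have hdp : dev (projK γ τ) = (γ / N) • dev τ := by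
      rw [hp, dev_sub, dev_smul, dev_dev hd, sub_smul, one_smul]
      abel
    have hNne : N ≠ 0 := ne_of_gt hN0
    have hfdp : fnorm (dev (projK γ τ)) = γ := by
      rw [hdp, fnorm_smul, abs_of_nonneg (by positivity), ← hNdef,
        div_mul_cancel₀ _ hNne]
    have htp : τ - projK γ τ = (1 - γ / N) • dev τ := by
      rw [hp, sub_sub_cancel]
    have hfp : fnorm (τ - projK γ τ) = N - γ := by
      rw [htp, fnorm_smul, abs_of_nonneg h01, ← hNdef, sub_mul, one_mul,
        div_mul_cancel₀ _ hNne]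
    refine ⟨⟨hps, le_of_eq hfdp⟩, ?_⟩
    intro σ hσ hσγ
    have hdσs : (dev σ).IsSymm := dev_isSymm hσ
    set g := fnorm (dev σ) with hgdef
    have hg0 : 0 ≤ g := fnorm_nonneg _
    have hsymts : (τ - σ).IsSymm := by
      unfold Matrix.IsSymm at *
      rw [Matrix.transpose_sub, hτ, hσ]
    have hdts : dev (τ - σ) = dev τ - dev σ := dev_sub τ σ
    have hdtss : (dev (τ - σ)).IsSymm := dev_isSymm hsymts
    set F := frob (dev τ) (dev σ) with hFdef
    have hexp : frob (dev (τ - σ)) (dev (τ - σ)) = N ^ 2 - 2 * F + g ^ 2 := by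
      rw [hdts, frob_sub_left, frob_sub_right, frob_sub_right,
        frob_comm (dev σ) (dev τ), ← hFdef, hNdef, hgdef, fnorm_sq hdτs, fnorm_sq hdσs]
      ring
    have hCS : F ≤ N * g := by
      rw [hFdef, hNdef, hgdef]
      exact cauchy_schwarz hdτs hdσs
    have hdecomp := frob_self_decomp hd (τ - σ)
    have hc2 : 0 ≤ (Matrix.trace (τ - σ) / (d : ℝ)) ^ 2 * d := by positivity
    have hγg1 : 0 ≤ γ - g := by linarith
    have hγg2 : 0 ≤ 2 * N - γ - g := by linarith
    have hDlb : (N - γ) ^ 2 ≤ N ^ 2 - 2 * F + g ^ 2 := by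
      nlinarith [hCS, mul_nonneg hγg1 hγg2]
    have hkey : (N - γ) ^ 2 ≤ frob (τ - σ) (τ - σ) := by
      rw [hexp] at *
      linarith [hdecomp, hDlb, hc2]
    constructor
    · rw [hfp, fnorm]
      exact (Real.le_sqrt (by linarith) (by nlinarith [frob_self_nonneg hsymts])).mpr hkey
    · intro he
      have hfs : frob (τ - σ) (τ - σ) = (N - γ) ^ 2 := by
        have h' : fnorm (τ - σ) = N - γ := by rw [← he, hfp]
        rw [← fnorm_sq hsymts, h']
      have hc2zero : (Matrix.trace (τ - σ) / (d : ℝ)) ^ 2 * d = 0 := by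
        rw [hexp] at hdecomp
        linarith [hDlb, hfs, hdecomp, hc2]
      have htr0 : Matrix.trace (τ - σ) = 0 := by
        have hd' : (0:ℝ) < d := by exact_mod_cast hd
        have h2 : (Matrix.trace (τ - σ) / (d : ℝ)) ^ 2 = 0 := by
          rcases mul_eq_zero.mp hc2zero with h | h
          · exact h
          · exact absurd h (ne_of_gt hd')
        have h3 : Matrix.trace (τ - σ) / (d : ℝ) = 0 :=
          pow_eq_zero_iff (n := 2) (by norm_num) |>.mp h2
        field_simp at h3
        rw [Matrix.trace_sub] at h3 ⊢
        linarith [h3]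
      have heq : N ^ 2 - 2 * F + g ^ 2 = (N - γ) ^ 2 := by
        rw [hexp] at hdecomp
        rw [hc2zero] at hdecomp
        linarith [hfs, hdecomp]
      have hq : (N - g) ^ 2 ≤ (N - γ) ^ 2 := by nlinarith [hCS, heq]
      have hgγ : g = γ := by
        refine le_antisymm hσγ ?_
        nlinarith [hq, hle, hσγ, hg0]
      have hFNγ : F = N * γ := by nlinarith [heq, hgγ]
      have hE : dev σ - (γ / N) • dev τ = 0 := by
        apply eq_zero_of_frob_self
        · unfold Matrix.IsSymm at *
          rw [Matrix.transpose_sub, Matrix.transpose_smul, hdσs, hdτs]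
        · have hNN : frob (dev τ) (dev τ) = N ^ 2 := (fnorm_sq hdτs).symm
          have hgg : frob (dev σ) (dev σ) = g ^ 2 := (fnorm_sq hdσs).symm
          simp only [frob_sub_left, frob_sub_right, frob_smul_left, frob_smul_right]
          rw [hNN, hgg, frob_comm (dev σ) (dev τ), ← hFdef, hFNγ, hgγ]
          field_simp
          ring
      have hdevσ : dev σ = (γ / N) • dev τ := sub_eq_zero.mp hE
      have htrστ : Matrix.trace σ = Matrix.trace τ := by
        rw [Matrix.trace_sub] at htr0
        linarith [htr0]
      have hσdec := dev_add_smul_one σ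
      have hτdec := dev_add_smul_one τ
      rw [hp]
      calc σ = dev σ + (Matrix.trace σ / (d:ℝ)) • 1 := hσdec
        _ = (γ / N) • dev τ + (Matrix.trace τ / (d:ℝ)) • 1 := by rw [hdevσ, htrστ]
        _ = (dev τ + (Matrix.trace τ / (d:ℝ)) • 1) - (1 - γ / N) • dev τ := by
            rw [sub_smul, one_smul]; abel
        _ = τ - (1 - γ / N) • dev τ := by rw [← hτdec]
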